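/- Uniform Exploration with per-arm exploration budget N := T^{2/3}(log T)^{1/3} achieves expected weak external regret O(T^{2/3}(log T)^{1/3}): specifically, conditional on the clean event the regret is at most K·N + 2T·√((2 log T)/N), and accounting for the failure probability adds at most o(T^{2/3}). -/

import Mathlib

open MeasureTheory ProbabilityTheory Finset

/-- Uniform Exploration with per-arm budget `N = T^{2/3}(log T)^{1/3}` on a
`K`-armed bandit: each arm is explored `N` times and then the empirically best
arm `âsel` is played for the remaining `T − K·N` rounds. If the clean event
`CE` (each empirical mean within `ρ̄_N = √((2 log T)/N)` of the true mean) fails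
with probability at most `2K/T⁴`, then (i) conditional on `CE` the regret
`N·∑_a Δ(a) + (T − K·N)·Δ(âsel)` is at most `K·N + 2T·ρ̄_N`, and (ii) the
expected regret is at most `K·N + 2T·ρ̄_N + 2K/T³`, which is
`O(T^{2/3}(log T)^{1/3})` with the failure term of order `o(T^{2/3})`. -/
theorem stmt10 {Ω A : Type*} [MeasureSpace Ω] [IsProbabilityMeasure (ℙ : Measure Ω)]
    [Fintype A]
    (T : ℕ) (hT : 2 ≤ T) (N : ℝ)
    (hN : N = (T : ℝ) ^ ((2 : ℝ) / 3) * (Real.log T) ^ ((1 : ℝ) / 3))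
    (μ : A → ℝ) (astar : A) (hstar : ∀ a, μ a ≤ μ astar)
    (hrange : ∀ a, μ a ∈ Set.Icc (0 : ℝ) 1)
    (μhat : A → Ω → ℝ)
    (hKN : (Fintype.card A : ℝ) * N ≤ T)
    (CE : Set Ω)
    (hCEdef : CE = {ω | ∀ a, |μhat a ω - μ a| ≤ Real.sqrt (2 * Real.log T / N)})
    (hCEfail : ℙ CEᶜ ≤ ENNReal.ofReal (2 * (Fintype.card A : ℝ) / (T : ℝ) ^ 4))
    (aselect : Ω → A)
    (hselect : ∀ ω, ∀ a, μhat a ω ≤ μhat (aselect ω) ω)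
    (Reg : Ω → ℝ)
    (hRegdef : ∀ ω, Reg ω =
      N * (∑ a, (μ astar - μ a)) + ((T : ℝ) - (Fintype.card A : ℝ) * N) *
        (μ astar - μ (aselect ω)))
    (hint : Integrable Reg) :
    (∀ ω ∈ CE, Reg ω ≤
        (Fintype.card A : ℝ) * N + 2 * T * Real.sqrt (2 * Real.log T / N)) ∧
    ∫ ω, Reg ω ≤
        (Fintype.card A : ℝ) * N + 2 * T * Real.sqrt (2 * Real.log T / N)
          + 2 * (Fintype.card A : ℝ) / (T : ℝ) ^ 3 := by

  have hT1 : (1:ℝ) < T := by exact_mod_cast hT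
  have hT0 : (0:ℝ) < T := by linarith
  have hlog : 0 < Real.log T := Real.log_pos hT1
  have hNpos : 0 < N := by
    rw [hN]; positivity
  set ρ := Real.sqrt (2 * Real.log T / N) with hρdef
  have hρ0 : 0 ≤ ρ := Real.sqrt_nonneg _
  set K := (Fintype.card A : ℝ) with hKdef
  have hK0 : 0 ≤ K := Nat.cast_nonneg _
  have hgap : ∀ a, 0 ≤ μ astar - μ a ∧ μ astar - μ a ≤ 1 := fun a =>
    ⟨by linarith [hstar a],
     by have h1 := (hrange astar).2; have h2 := (hrange a).1; linarith⟩
  have hsum : (∑ a, (μ astar - μ a)) ≤ K := by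
    calc ∑ a, (μ astar - μ a) ≤ ∑ _a : A, (1:ℝ) :=
          Finset.sum_le_sum (fun a _ => (hgap a).2)
      _ = K := by simp [hKdef]
  have hsum0 : 0 ≤ ∑ a, (μ astar - μ a) :=
    Finset.sum_nonneg (fun a _ => (hgap a).1)
  have hTKN : 0 ≤ (T:ℝ) - K * N := by linarith [hKN]
  have hCEbound : ∀ ω ∈ CE, Reg ω ≤ K * N + 2 * T * ρ := by
    intro ω hω
    rw [hCEdef] at hω
    have h1 := abs_le.mp (hω astar)
    have h2 := abs_le.mp (hω (aselect ω))
    have h3 := hselect ω astar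
    have hΔ : μ astar - μ (aselect ω) ≤ 2 * ρ := by
      obtain ⟨h1a, h1b⟩ := h1; obtain ⟨h2a, h2b⟩ := h2; linarith
    rw [hRegdef]
    have t1 : N * (∑ a, (μ astar - μ a)) ≤ N * K :=
      mul_le_mul_of_nonneg_left hsum hNpos.le
    have t2 : ((T:ℝ) - K * N) * (μ astar - μ (aselect ω)) ≤ 2 * T * ρ := by
      have hKN0 : 0 ≤ K * N := mul_nonneg hK0 hNpos.le
      nlinarith [(hgap (aselect ω)).1]
    linarith
  refine ⟨hCEbound, ?_⟩
  have hRegT : ∀ ω, Reg ω ≤ T := by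
    intro ω
    rw [hRegdef]
    have t1 : N * (∑ a, (μ astar - μ a)) ≤ N * K :=
      mul_le_mul_of_nonneg_left hsum hNpos.le
    have t2 : ((T:ℝ) - K * N) * (μ astar - μ (aselect ω)) ≤ (T:ℝ) - K * N :=
      mul_le_of_le_one_right hTKN (hgap (aselect ω)).2
    linarith
  set S := toMeasurable ℙ CEᶜ with hSdef
  have hS : MeasurableSet S := measurableSet_toMeasurable ℙ _
  have hSsub : CEᶜ ⊆ S := subset_toMeasurable ℙ _
  have hSμ : ℙ S = ℙ CEᶜ := measure_toMeasurable _
  set B := K * N + 2 * (T:ℝ) * ρ with hBdef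
  have hB0 : 0 ≤ B := by
    have := mul_nonneg hK0 hNpos.le
    have : 0 ≤ 2 * (T:ℝ) * ρ := by positivity
    nlinarith [mul_nonneg hK0 hNpos.le]
  have hle : ∀ ω, Reg ω ≤ B + (T:ℝ) * S.indicator (fun _ => (1:ℝ)) ω := by
    intro ω
    by_cases hω : ω ∈ CE
    · have hind : 0 ≤ S.indicator (fun _ => (1:ℝ)) ω :=
        Set.indicator_nonneg (fun _ _ => zero_le_one) ω
      have := hCEbound ω hω
      nlinarith
    · have hωS : ω ∈ S := hSsub hω
      rw [Set.indicator_of_mem hωS]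
      have := hRegT ω
      linarith
  have hint2 : Integrable (fun ω => B + (T:ℝ) * S.indicator (fun _ => (1:ℝ)) ω) := by
    apply (integrable_const B).add
    exact ((integrable_const (1:ℝ)).indicator hS).const_mul _
  have hmono : ∫ ω, Reg ω ≤ ∫ ω, (B + (T:ℝ) * S.indicator (fun _ => (1:ℝ)) ω) :=
    integral_mono hint hint2 hle
  have hcalc : ∫ ω, (B + (T:ℝ) * S.indicator (fun _ => (1:ℝ)) ω)
      = B + (T:ℝ) * (ℙ S).toReal := by
    rw [integral_add (integrable_const B)
        (((integrable_const (1:ℝ)).indicator hS).const_mul _),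
      integral_const, integral_const_mul, integral_indicator_const _ hS]
    simp [measureReal_def]
  have htail : (T:ℝ) * (ℙ S).toReal ≤ 2 * K / (T:ℝ) ^ 3 := by
    have h1 : (ℙ S).toReal ≤ 2 * K / (T:ℝ) ^ 4 := by
      rw [hSμ]
      refine ENNReal.toReal_le_of_le_ofReal (by positivity) hCEfail
    calc (T:ℝ) * (ℙ S).toReal ≤ (T:ℝ) * (2 * K / (T:ℝ) ^ 4) :=
          mul_le_mul_of_nonneg_left h1 hT0.le
      _ = 2 * K / (T:ℝ) ^ 3 := by field_simp
  calc ∫ ω, Reg ω ≤ B + (T:ℝ) * (ℙ S).toReal := by rw [← hcalc]; exact hmono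
    _ ≤ K * N + 2 * T * ρ + 2 * K / (T:ℝ) ^ 3 := by rw [hBdef]; linarith
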